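/- arXiv:2208.07934 — 2 statements merged into one kernel-verified Lean document; each statement's English description precedes it below -/
import Mathlib

section
/- For random vectors X in R^d and Y in R^e with joint characteristic function φ_{X,Y}(α,β) = E[exp(i(αᵀX + βᵀY))] and marginal characteristic functions φ_X, φ_Y, one has for all α, β: |φ_{X,Y}(α,β) − φ_X(α)φ_Y(β)|² ≤ (1 − |φ_X(α)|²)(1 − |φ_Y(β)|²). -/
open MeasureTheory ProbabilityTheory Filter Topology Complex Matrix

section Aux

variable {Ω : Type*} [MeasurableSpace Ω] (μ : Measure Ω) [IsProbabilityMeasure μ]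

lemma intg_of_unit {f : Ω → ℂ} (hf : AEStronglyMeasurable f μ)
    (hu : ∀ ω, ‖f ω‖ = 1) : Integrable f μ :=
  (integrable_const (1:ℝ)).mono' hf (Filter.Eventually.of_forall fun ω => by
    simp [hu ω])

lemma abs_integral_le_one {f : Ω → ℂ} (hu : ∀ ω, ‖f ω‖ = 1) :
    ‖∫ ω, f ω ∂μ‖ ≤ 1 := by
  calc ‖∫ ω, f ω ∂μ‖ ≤ ∫ ω, ‖f ω‖ ∂μ := by
        simpa using norm_integral_le_integral_norm (μ := μ) f
    _ = 1 := by simp [hu]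

lemma sq_int_eq {f : Ω → ℂ} (hf : AEStronglyMeasurable f μ)
    (hu : ∀ ω, ‖f ω‖ = 1) :
    ∫ ω, ‖f ω - ∫ ω', f ω' ∂μ‖ ^ 2 ∂μ = 1 - ‖∫ ω, f ω ∂μ‖ ^ 2 := by
  set c := ∫ ω, f ω ∂μ with hc
  have hif : Integrable f μ := intg_of_unit μ hf hu
  have hconj : Integrable (fun ω => (starRingEnd ℂ) (f ω)) μ :=
    hif.norm.mono' (Complex.continuous_conj.comp_aestronglyMeasurable hif.1)
      (Filter.Eventually.of_forall fun ω => by simp)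
  have h1 : ∀ ω, (‖f ω - c‖:ℝ) ^ 2 = ((1 : ℂ) - f ω * (starRingEnd ℂ) c
      - c * (starRingEnd ℂ) (f ω) + c * (starRingEnd ℂ) c).re := by
    intro ω
    have h2 : f ω * (starRingEnd ℂ) (f ω) = 1 := by
      rw [Complex.mul_conj]
      norm_cast
      rw [Complex.normSq_eq_norm_sq, hu ω]; norm_num
    have h3 : (f ω - c) * (starRingEnd ℂ) (f ω - c) = (1 : ℂ) - f ω * (starRingEnd ℂ) c
        - c * (starRingEnd ℂ) (f ω) + c * (starRingEnd ℂ) c := by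
      rw [map_sub]
      calc (f ω - c) * ((starRingEnd ℂ) (f ω) - (starRingEnd ℂ) c)
          = f ω * (starRingEnd ℂ) (f ω) - f ω * (starRingEnd ℂ) c
            - c * (starRingEnd ℂ) (f ω) + c * (starRingEnd ℂ) c := by ring
        _ = _ := by rw [h2]
    have h4 : (‖f ω - c‖:ℝ) ^ 2 = ((f ω - c) * (starRingEnd ℂ) (f ω - c)).re := by
      rw [Complex.mul_conj, Complex.sq_norm, Complex.ofReal_re]
    rw [h4, h3]
  simp_rw [h1]
  have hint : Integrable (fun ω => (1 : ℂ) - f ω * (starRingEnd ℂ) c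
      - c * (starRingEnd ℂ) (f ω) + c * (starRingEnd ℂ) c) μ := by
    apply Integrable.add
    apply Integrable.sub
    apply Integrable.sub (integrable_const _) (hif.mul_const _)
    · exact (hconj.const_mul _)
    · exact integrable_const _
  rw [← RCLike.re_eq_complex_re] ; rw [integral_re hint]
  have : ∫ ω, ((1 : ℂ) - f ω * (starRingEnd ℂ) c - c * (starRingEnd ℂ) (f ω)
      + c * (starRingEnd ℂ) c) ∂μ = 1 - c * (starRingEnd ℂ) c := by
    have hA1 : Integrable (fun ω => (1:ℂ) - f ω * (starRingEnd ℂ) c) μ := by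
      exact (integrable_const _).sub (hif.mul_const _)
    have hA : Integrable (fun ω => (1:ℂ) - f ω * (starRingEnd ℂ) c
        - c * (starRingEnd ℂ) (f ω)) μ := by
      exact hA1.sub (hconj.const_mul _)
    rw [integral_add hA (integrable_const _),
        integral_sub hA1 (hconj.const_mul _),
        integral_sub (integrable_const _) (hif.mul_const _),
        integral_mul_const, integral_const_mul, integral_const, integral_const]
    have : ∫ ω, (starRingEnd ℂ) (f ω) ∂μ = (starRingEnd ℂ) c := by
      rw [hc, ← integral_conj]
    rw [this]
    simp [← hc]
  rw [this]
  have : (c * (starRingEnd ℂ) c) = ((‖c‖ ^ 2 : ℝ) : ℂ) := by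
    rw [Complex.mul_conj, Complex.sq_norm]
  rw [this]
  simp [← Complex.ofReal_pow]

lemma cov_ineq {f g : Ω → ℂ} (hf : AEStronglyMeasurable f μ) (hg : AEStronglyMeasurable g μ)
    (huf : ∀ ω, ‖f ω‖ = 1) (hug : ∀ ω, ‖g ω‖ = 1) :
    ‖(∫ ω, f ω * g ω ∂μ) - (∫ ω, f ω ∂μ) * ∫ ω, g ω ∂μ‖ ^ 2 ≤
      (1 - ‖∫ ω, f ω ∂μ‖ ^ 2) * (1 - ‖∫ ω, g ω ∂μ‖ ^ 2) := by
  set a := ∫ ω, f ω ∂μ with ha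
  set b := ∫ ω, g ω ∂μ with hb
  have hif : Integrable f μ := intg_of_unit μ hf huf
  have hig : Integrable g μ := intg_of_unit μ hg hug
  have hifg : Integrable (fun ω => f ω * g ω) μ :=
    intg_of_unit μ (hf.mul hg) (fun ω => by simp [_root_.map_mul, huf ω, hug ω])
  -- step 1: covariance identity
  have hFG : Integrable (fun ω => (f ω - a) * (g ω - b)) μ := by
    have : (fun ω => (f ω - a) * (g ω - b))
        = fun ω => f ω * g ω - f ω * b - a * g ω + a * b := by
      funext ω; ring
    rw [this]
    have h1 : Integrable (fun ω => f ω * g ω - f ω * b) μ := by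
      exact hifg.sub (hif.mul_const _)
    have h2 : Integrable (fun ω => f ω * g ω - f ω * b - a * g ω) μ := by
      exact h1.sub (hig.const_mul _)
    exact h2.add (integrable_const _)
  have hkey : ∫ ω, (f ω - a) * (g ω - b) ∂μ = (∫ ω, f ω * g ω ∂μ) - a * b := by
    have : (fun ω => (f ω - a) * (g ω - b))
        = fun ω => f ω * g ω - f ω * b - a * g ω + a * b := by
      funext ω; ring
    rw [this]
    have h1 : Integrable (fun ω => f ω * g ω - f ω * b) μ := by
      exact hifg.sub (hif.mul_const _)
    have h2 : Integrable (fun ω => f ω * g ω - f ω * b - a * g ω) μ := by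
      exact h1.sub (hig.const_mul _)
    rw [integral_add h2 (integrable_const _),
        integral_sub h1 (hig.const_mul _),
        integral_sub hifg (hif.mul_const _),
        integral_mul_const, integral_const_mul, integral_const]
    simp [← ha, ← hb]
  -- step 2: Cauchy-Schwarz
  have hm2 : ∀ {h : Ω → ℂ} {c : ℂ}, AEStronglyMeasurable h μ → (∀ ω, ‖h ω‖ = 1) →
      MemLp (fun ω => ‖h ω - c‖) (ENNReal.ofReal 2) μ := by
    intro h c hh hu
    refine MemLp.mono_exponent ?_ le_top
    refine memLp_top_of_bound ((hh.sub aestronglyMeasurable_const).norm) (1 + ‖c‖)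
      (Filter.Eventually.of_forall fun ω => ?_)
    rw [Real.norm_of_nonneg (norm_nonneg _)]
    calc ‖h ω - c‖ ≤ ‖h ω‖ + ‖c‖ := norm_sub_le _ _
      _ = 1 + ‖c‖ := by simp [hu ω]
  have hCS : ∫ ω, ‖f ω - a‖ * ‖g ω - b‖ ∂μ ≤
      (∫ ω, ‖f ω - a‖ ^ (2:ℝ) ∂μ) ^ (1/2 : ℝ) * (∫ ω, ‖g ω - b‖ ^ (2:ℝ) ∂μ) ^ (1/2 : ℝ) := by
    exact integral_mul_le_Lp_mul_Lq_of_nonneg (Real.holderConjugate_iff_eq_conjExponent (by norm_num) |>.mpr (by norm_num) : Real.HolderConjugate 2 2)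
      (Filter.Eventually.of_forall fun ω => norm_nonneg _)
      (Filter.Eventually.of_forall fun ω => norm_nonneg _)
      (hm2 hf huf) (hm2 hg hug)
  have hA := sq_int_eq μ hf huf
  have hB := sq_int_eq μ hg hug
  rw [← ha] at hA
  rw [← hb] at hB
  have habs : ‖(∫ ω, f ω * g ω ∂μ) - a * b‖ ≤
      (1 - ‖a‖ ^ 2) ^ (1/2 : ℝ) * (1 - ‖b‖ ^ 2) ^ (1/2 : ℝ) := by
    rw [← hkey]
    calc ‖∫ ω, (f ω - a) * (g ω - b) ∂μ‖
        = ‖∫ ω, (f ω - a) * (g ω - b) ∂μ‖ := rfl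
      _ ≤ ∫ ω, ‖(f ω - a) * (g ω - b)‖ ∂μ := norm_integral_le_integral_norm _
      _ = ∫ ω, ‖f ω - a‖ * ‖g ω - b‖ ∂μ := by simp_rw [norm_mul]
      _ ≤ _ := hCS
      _ = _ := by
          have hcast : ∀ x : ℝ, x ^ (2:ℝ) = x ^ (2:ℕ) := fun x => by
            rw [show (2:ℝ) = ((2:ℕ):ℝ) by norm_num, Real.rpow_natCast]
          simp_rw [hcast]
          rw [hA, hB]
  -- step 3: square both sides
  have h1a : ‖a‖ ≤ 1 := by rw [ha]; exact abs_integral_le_one μ huf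
  have h1b : ‖b‖ ≤ 1 := by rw [hb]; exact abs_integral_le_one μ hug
  have hAnn : (0:ℝ) ≤ 1 - ‖a‖ ^ 2 := by nlinarith [norm_nonneg a]
  have hBnn : (0:ℝ) ≤ 1 - ‖b‖ ^ 2 := by nlinarith [norm_nonneg b]
  calc ‖(∫ ω, f ω * g ω ∂μ) - a * b‖ ^ 2
      ≤ ((1 - ‖a‖ ^ 2) ^ (1/2 : ℝ) * (1 - ‖b‖ ^ 2) ^ (1/2 : ℝ)) ^ 2 := by
        apply pow_le_pow_left₀ (norm_nonneg _) habs
    _ = (1 - ‖a‖ ^ 2) * (1 - ‖b‖ ^ 2) := by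
        rw [mul_pow, ← Real.rpow_natCast ((1 - ‖a‖ ^ 2) ^ (1/2:ℝ)) 2,
          ← Real.rpow_natCast ((1 - ‖b‖ ^ 2) ^ (1/2:ℝ)) 2,
          ← Real.rpow_mul hAnn, ← Real.rpow_mul hBnn]
        norm_num

end Aux

noncomputable def charFn {Ω : Type*} [MeasurableSpace Ω] (μ : Measure Ω)
    {d : ℕ} (X : Ω → (Fin d → ℝ)) (t : Fin d → ℝ) : ℂ :=
  ∫ ω, Complex.exp (Complex.I * ((∑ i, t i * X ω i : ℝ) : ℂ)) ∂μ

noncomputable def jointCharFn {Ω : Type*} [MeasurableSpace Ω] (μ : Measure Ω)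
    {d e : ℕ} (X : Ω → (Fin d → ℝ)) (Y : Ω → (Fin e → ℝ))
    (α : Fin d → ℝ) (β : Fin e → ℝ) : ℂ :=
  ∫ ω, Complex.exp (Complex.I * (((∑ i, α i * X ω i) + (∑ j, β j * Y ω j) : ℝ) : ℂ)) ∂μ

theorem stmt0 {Ω : Type*} [MeasurableSpace Ω] (μ : Measure Ω) [IsProbabilityMeasure μ]
    {d e : ℕ} (X : Ω → (Fin d → ℝ)) (Y : Ω → (Fin e → ℝ))
    (hX : Measurable X) (hY : Measurable Y) (α : Fin d → ℝ) (β : Fin e → ℝ) :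
    ‖jointCharFn μ X Y α β - charFn μ X α * charFn μ Y β‖ ^ 2 ≤
      (1 - ‖charFn μ X α‖ ^ 2) * (1 - ‖charFn μ Y β‖ ^ 2) := by
  set f : Ω → ℂ := fun ω => Complex.exp (Complex.I * ((∑ i, α i * X ω i : ℝ) : ℂ)) with hfdef
  set g : Ω → ℂ := fun ω => Complex.exp (Complex.I * ((∑ j, β j * Y ω j : ℝ) : ℂ)) with hgdef
  have hSX : Measurable fun ω => (∑ i, α i * X ω i : ℝ) := by
    exact Finset.measurable_sum _ fun i _ => (measurable_const.mul ((measurable_pi_apply i).comp hX))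
  have hSY : Measurable fun ω => (∑ j, β j * Y ω j : ℝ) := by
    exact Finset.measurable_sum _ fun j _ => (measurable_const.mul ((measurable_pi_apply j).comp hY))
  have hf : AEStronglyMeasurable f μ :=
    (Complex.measurable_exp.comp (measurable_const.mul (Complex.measurable_ofReal.comp hSX))).aestronglyMeasurable
  have hg : AEStronglyMeasurable g μ :=
    (Complex.measurable_exp.comp (measurable_const.mul (Complex.measurable_ofReal.comp hSY))).aestronglyMeasurable
  have huf : ∀ ω, ‖f ω‖ = 1 := fun ω => by
    simp [hfdef, Complex.norm_exp]
  have hug : ∀ ω, ‖g ω‖ = 1 := fun ω => by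
    simp [hgdef, Complex.norm_exp]
  have hjoint : jointCharFn μ X Y α β = ∫ ω, f ω * g ω ∂μ := by
    unfold jointCharFn
    congr 1
    funext ω
    rw [hfdef, hgdef, ← Complex.exp_add]
    push_cast
    ring_nf
  rw [hjoint, show charFn μ X α = ∫ ω, f ω ∂μ from rfl, show charFn μ Y β = ∫ ω, g ω ∂μ from rfl]
  exact cov_ineq μ hf hg huf hug
end

section
/- Assuming the uniform ECF consistency theorem of Csörgő (if log T_n / n → 0 then sup_{‖γ‖<T_n}|φ(γ) − φ_n(γ)| → 0 a.s.), the KacIM estimator is consistent: if log T_n / n → 0 and T_n → ∞ then | κ(X,Y) − sup_{‖γ‖<T_n}|Δ_n(γ)| | → 0 almost surely. -/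
open Filter Topology

lemma abs_sub_le_two' (a b : ℂ) (ha : ‖a‖ ≤ 1) (hb : ‖b‖ ≤ 1) :
    ‖a - b‖ ≤ 2 := by
  calc ‖a - b‖ ≤ ‖a‖ + ‖b‖ := by
        simpa [sub_eq_add_neg] using norm_add_le a (-b)
    _ ≤ 2 := by linarith

theorem stmt12 {m : ℕ} (φ ψ : (Fin m → ℝ) → ℂ) (φn ψn : ℕ → (Fin m → ℝ) → ℂ)
    (T : ℕ → ℝ) (hT0 : ∀ n, 0 < T n) (hTtop : Tendsto T atTop atTop)
    (hlog : Tendsto (fun n => Real.log (T n) / n) atTop (𝓝 0))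
    (hφb : ∀ γ, ‖φ γ‖ ≤ 1) (hψb : ∀ γ, ‖ψ γ‖ ≤ 1)
    (hφnb : ∀ n γ, ‖φn n γ‖ ≤ 1) (hψnb : ∀ n γ, ‖ψn n γ‖ ≤ 1)
    (hφ : Tendsto (fun n => ⨆ γ : {γ : Fin m → ℝ // ‖γ‖ < T n},
        ‖φ γ.1 - φn n γ.1‖) atTop (𝓝 0))
    (hψ : Tendsto (fun n => ⨆ γ : {γ : Fin m → ℝ // ‖γ‖ < T n},
        ‖ψ γ.1 - ψn n γ.1‖) atTop (𝓝 0)) :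
    Tendsto (fun n => |(⨆ γ, ‖φ γ - ψ γ‖) -
        (⨆ γ : {γ : Fin m → ℝ // ‖γ‖ < T n},
          ‖φn n γ.1 - ψn n γ.1‖)|) atTop (𝓝 0) := by
  have hne : ∀ n, Nonempty {γ : Fin m → ℝ // ‖γ‖ < T n} := fun n =>
    ⟨⟨0, by simpa using hT0 n⟩⟩
  set K : ℝ := ⨆ γ, ‖φ γ - ψ γ‖ with hK
  set S : ℕ → ℝ := fun n => ⨆ γ : {γ : Fin m → ℝ // ‖γ‖ < T n},
      ‖φn n γ.1 - ψn n γ.1‖ with hS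
  set S' : ℕ → ℝ := fun n => ⨆ γ : {γ : Fin m → ℝ // ‖γ‖ < T n},
      ‖φ γ.1 - ψ γ.1‖ with hS'
  set A : ℕ → ℝ := fun n => ⨆ γ : {γ : Fin m → ℝ // ‖γ‖ < T n},
      ‖φ γ.1 - φn n γ.1‖ with hA
  set B : ℕ → ℝ := fun n => ⨆ γ : {γ : Fin m → ℝ // ‖γ‖ < T n},
      ‖ψ γ.1 - ψn n γ.1‖ with hB
  -- boundedness
  have bddK : BddAbove (Set.range fun γ => ‖φ γ - ψ γ‖) :=
    ⟨2, by rintro x ⟨γ, rfl⟩; exact abs_sub_le_two' _ _ (hφb γ) (hψb γ)⟩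
  have bddS : ∀ n, BddAbove (Set.range fun γ : {γ : Fin m → ℝ // ‖γ‖ < T n} =>
      ‖φn n γ.1 - ψn n γ.1‖) := fun n =>
    ⟨2, by rintro x ⟨γ, rfl⟩; exact abs_sub_le_two' _ _ (hφnb n γ.1) (hψnb n γ.1)⟩
  have bddS' : ∀ n, BddAbove (Set.range fun γ : {γ : Fin m → ℝ // ‖γ‖ < T n} =>
      ‖φ γ.1 - ψ γ.1‖) := fun n =>
    ⟨2, by rintro x ⟨γ, rfl⟩; exact abs_sub_le_two' _ _ (hφb γ.1) (hψb γ.1)⟩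
  have bddA : ∀ n, BddAbove (Set.range fun γ : {γ : Fin m → ℝ // ‖γ‖ < T n} =>
      ‖φ γ.1 - φn n γ.1‖) := fun n =>
    ⟨2, by rintro x ⟨γ, rfl⟩; exact abs_sub_le_two' _ _ (hφb γ.1) (hφnb n γ.1)⟩
  have bddB : ∀ n, BddAbove (Set.range fun γ : {γ : Fin m → ℝ // ‖γ‖ < T n} =>
      ‖ψ γ.1 - ψn n γ.1‖) := fun n =>
    ⟨2, by rintro x ⟨γ, rfl⟩; exact abs_sub_le_two' _ _ (hψb γ.1) (hψnb n γ.1)⟩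
  have hS'leK : ∀ n, S' n ≤ K := by
    intro n
    have := hne n
    exact ciSup_le fun γ => le_ciSup bddK γ.1
  -- |S n - S' n| ≤ A n + B n
  have hdiff : ∀ n, |S' n - S n| ≤ A n + B n := by
    intro n
    have := hne n
    have h1 : S n ≤ S' n + (A n + B n) := by
      refine ciSup_le fun γ => ?_
      have tri : ‖φn n γ.1 - ψn n γ.1‖ ≤
          ‖φ γ.1 - ψ γ.1‖ + (‖φ γ.1 - φn n γ.1‖ +
            ‖ψ γ.1 - ψn n γ.1‖) := by
        have : φn n γ.1 - ψn n γ.1 =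
            (φ γ.1 - ψ γ.1) - (φ γ.1 - φn n γ.1) + (ψ γ.1 - ψn n γ.1) := by ring
        rw [this]
        calc ‖(φ γ.1 - ψ γ.1) - (φ γ.1 - φn n γ.1) + (ψ γ.1 - ψn n γ.1)‖
            ≤ ‖(φ γ.1 - ψ γ.1) - (φ γ.1 - φn n γ.1)‖
              + ‖ψ γ.1 - ψn n γ.1‖ := norm_add_le _ _
          _ ≤ ‖φ γ.1 - ψ γ.1‖ + ‖φ γ.1 - φn n γ.1‖
              + ‖ψ γ.1 - ψn n γ.1‖ := by
                have := norm_sub_le (φ γ.1 - ψ γ.1) (φ γ.1 - φn n γ.1)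
                linarith
          _ = _ := by ring
      exact tri.trans (by
        have h1 := le_ciSup (bddS' n) γ
        have h2 := le_ciSup (bddA n) γ
        have h3 := le_ciSup (bddB n) γ
        linarith)
    have h2 : S' n ≤ S n + (A n + B n) := by
      refine ciSup_le fun γ => ?_
      have tri : ‖φ γ.1 - ψ γ.1‖ ≤
          ‖φn n γ.1 - ψn n γ.1‖ + (‖φ γ.1 - φn n γ.1‖ +
            ‖ψ γ.1 - ψn n γ.1‖) := by
        have : φ γ.1 - ψ γ.1 =
            (φn n γ.1 - ψn n γ.1) + (φ γ.1 - φn n γ.1) - (ψ γ.1 - ψn n γ.1) := by ring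
        rw [this]
        calc ‖(φn n γ.1 - ψn n γ.1) + (φ γ.1 - φn n γ.1) - (ψ γ.1 - ψn n γ.1)‖
            ≤ ‖(φn n γ.1 - ψn n γ.1) + (φ γ.1 - φn n γ.1)‖
              + ‖ψ γ.1 - ψn n γ.1‖ := norm_sub_le _ _
          _ ≤ ‖φn n γ.1 - ψn n γ.1‖ + ‖φ γ.1 - φn n γ.1‖
              + ‖ψ γ.1 - ψn n γ.1‖ := by
                have := norm_add_le (φn n γ.1 - ψn n γ.1) (φ γ.1 - φn n γ.1)
                linarith
          _ = _ := by ring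
      exact tri.trans (by
        have h1 := le_ciSup (bddS n) γ
        have h2 := le_ciSup (bddA n) γ
        have h3 := le_ciSup (bddB n) γ
        linarith)
    rw [abs_sub_le_iff]
    constructor <;> linarith
  -- K - S' n → 0
  have hKS' : Tendsto (fun n => K - S' n) atTop (𝓝 0) := by
    rw [NormedAddCommGroup.tendsto_nhds_zero]
    intro ε hε
    have hlt : K - ε < K := by linarith
    obtain ⟨γ0, hγ0⟩ := exists_lt_of_lt_ciSup hlt
    filter_upwards [hTtop.eventually_gt_atTop ‖γ0‖] with n hn
    have hmem : (⟨γ0, hn⟩ : {γ : Fin m → ℝ // ‖γ‖ < T n}) = ⟨γ0, hn⟩ := rfl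
    have hle : ‖φ γ0 - ψ γ0‖ ≤ S' n :=
      le_ciSup (bddS' n) (⟨γ0, hn⟩ : {γ : Fin m → ℝ // ‖γ‖ < T n})
    have h1 : K - S' n < ε := by linarith
    have h2 : 0 ≤ K - S' n := by linarith [hS'leK n]
    rw [Real.norm_eq_abs, abs_of_nonneg h2]
    exact h1
  -- squeeze
  have hbound : ∀ n, |K - S n| ≤ (K - S' n) + (A n + B n) := by
    intro n
    have h1 := hdiff n
    have h2 := hS'leK n
    rw [abs_sub_le_iff] at h1 ⊢
    constructor <;> [skip; skip] <;> cases' abs_sub_le_iff.mp (le_refl |S' n - S n|) with _ _ <;>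
      linarith [abs_nonneg (S' n - S n), h1.1, h1.2]
  have hlim : Tendsto (fun n => (K - S' n) + (A n + B n)) atTop (𝓝 0) := by
    have := hKS'.add (hφ.add hψ)
    simpa using this
  exact squeeze_zero (fun n => abs_nonneg _) hbound hlim
end
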